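/- Let N ≥ 2, let C = {x ∈ ℝ^N : x_1 > x_2 > ⋯ > x_N > 0}, and let F be the type A prepotential with Λ = e^{3/2}. Then at every point of C its Hessian entries T_ij = ∂²F/∂x_i∂x_j satisfy e^{−T_ij} = e^{∑_{p=1}^N T_ip} − e^{∑_{q=1}^N T_jq} for all 1 ≤ i < j ≤ N. -/

import Mathlib

open Real Finset

/-- Partial derivative in the `i`-th coordinate direction. -/
noncomputable def pd {N : ℕ} (i : Fin N) (f : (Fin N → ℝ) → ℝ) : (Fin N → ℝ) → ℝ :=
  fun x => fderiv ℝ f x (Pi.single i 1)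

/-- Hessian entry `T_ij = ∂²f/∂x_i∂x_j`. -/
noncomputable def hess {N : ℕ} (f : (Fin N → ℝ) → ℝ) (i j : Fin N) : (Fin N → ℝ) → ℝ :=
  pd i (pd j f)

/-- The open cone `x₁ > x₂ > ⋯ > x_N > 0`. -/
def cone (N : ℕ) : Set (Fin N → ℝ) := {x | StrictAnti x ∧ ∀ i, 0 < x i}

/-- The type A prepotential with cut-off `Λ`. -/
noncomputable def FA (N : ℕ) (Λ : ℝ) (x : Fin N → ℝ) : ℝ :=
  (1/2) * ∑ i : Fin N, ∑ j : Fin N,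
      (if i < j then (x i - x j)^2 * Real.log ((x i - x j)/Λ) else 0)
  + (1/2) * ∑ i : Fin N, (x i)^2 * Real.log (x i / Λ)

namespace TypeA

noncomputable def q1 (Λ t : ℝ) : ℝ := 2*t*Real.log (t/Λ) + t
noncomputable def q2 (Λ t : ℝ) : ℝ := 2*Real.log (t/Λ) + 3

lemma hasDerivAt_log_div {Λ t : ℝ} (hΛ : Λ ≠ 0) (ht : t ≠ 0) :
    HasDerivAt (fun s : ℝ => Real.log (s/Λ)) (1/t) t := by
  have h1 : HasDerivAt (fun s : ℝ => s/Λ) (1/Λ) t := (hasDerivAt_id t).div_const Λ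
  have := (Real.hasDerivAt_log (div_ne_zero ht hΛ)).comp t h1
  refine this.congr_deriv ?_
  field_simp

lemma hasDerivAt_q {Λ t : ℝ} (hΛ : Λ ≠ 0) (ht : t ≠ 0) :
    HasDerivAt (fun s : ℝ => s^2 * Real.log (s/Λ)) (q1 Λ t) t := by
  have h3 : HasDerivAt (fun s : ℝ => s^2) (2*t) t := by
    simpa using (hasDerivAt_pow 2 t)
  have := h3.mul (hasDerivAt_log_div hΛ ht)
  refine this.congr_deriv ?_
  unfold q1; field_simp

lemma hasDerivAt_q1 {Λ t : ℝ} (hΛ : Λ ≠ 0) (ht : t ≠ 0) :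
    HasDerivAt (fun s : ℝ => q1 Λ s) (q2 Λ t) t := by
  have h1 : HasDerivAt (fun s : ℝ => 2*s*Real.log (s/Λ))
      (2*Real.log (t/Λ) + 2) t := by
    have h2 : HasDerivAt (fun s : ℝ => 2*s) 2 t := by
      simpa using (hasDerivAt_id t).const_mul (2:ℝ)
    have := h2.mul (hasDerivAt_log_div hΛ ht)
    refine this.congr_deriv ?_
    field_simp
  have := h1.add (hasDerivAt_id t)
  refine this.congr_deriv ?_
  unfold q2; ring

variable {N : ℕ}

noncomputable abbrev prj (a : Fin N) : (Fin N → ℝ) →L[ℝ] ℝ := ContinuousLinearMap.proj a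

lemma hasFDerivAt_pair {Λ : ℝ} (hΛ : Λ ≠ 0) {a b : Fin N} {x : Fin N → ℝ}
    (h : x a - x b ≠ 0) :
    HasFDerivAt (fun y : Fin N → ℝ => (y a - y b)^2 * Real.log ((y a - y b)/Λ))
      ((q1 Λ (x a - x b)) • (prj a - prj b)) x := by
  have hf : HasFDerivAt (fun y : Fin N → ℝ => y a - y b) (prj a - prj b) x :=
    (hasFDerivAt_apply a x).sub (hasFDerivAt_apply b x)
  exact (hasDerivAt_q hΛ h).comp_hasFDerivAt x hf

lemma hasFDerivAt_pair1 {Λ : ℝ} (hΛ : Λ ≠ 0) {a b : Fin N} {x : Fin N → ℝ}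
    (h : x a - x b ≠ 0) :
    HasFDerivAt (fun y : Fin N → ℝ => q1 Λ (y a - y b))
      ((q2 Λ (x a - x b)) • (prj a - prj b)) x := by
  have hf : HasFDerivAt (fun y : Fin N → ℝ => y a - y b) (prj a - prj b) x :=
    (hasFDerivAt_apply a x).sub (hasFDerivAt_apply b x)
  exact (hasDerivAt_q1 hΛ h).comp_hasFDerivAt x hf

lemma hasFDerivAt_single {Λ : ℝ} (hΛ : Λ ≠ 0) {a : Fin N} {x : Fin N → ℝ}
    (h : x a ≠ 0) :
    HasFDerivAt (fun y : Fin N → ℝ => (y a)^2 * Real.log ((y a)/Λ))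
      ((q1 Λ (x a)) • (prj a)) x :=
  by have hf : HasFDerivAt (fun y : Fin N → ℝ => y a) (prj a) x := hasFDerivAt_apply a x; exact (hasDerivAt_q hΛ h).comp_hasFDerivAt x hf

lemma hasFDerivAt_single1 {Λ : ℝ} (hΛ : Λ ≠ 0) {a : Fin N} {x : Fin N → ℝ}
    (h : x a ≠ 0) :
    HasFDerivAt (fun y : Fin N → ℝ => q1 Λ (y a))
      ((q2 Λ (x a)) • (prj a)) x :=
  by have hf : HasFDerivAt (fun y : Fin N → ℝ => y a) (prj a) x := hasFDerivAt_apply a x; exact (hasDerivAt_q1 hΛ h).comp_hasFDerivAt x hf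

lemma cone_sub_ne {x : Fin N → ℝ} (hx : x ∈ cone N) {a b : Fin N} (hab : a < b) :
    x a - x b ≠ 0 := sub_ne_zero.2 (ne_of_gt (hx.1 hab))

noncomputable def DFA (Λ : ℝ) (x : Fin N → ℝ) : (Fin N → ℝ) →L[ℝ] ℝ :=
  (1/2:ℝ) • (∑ a : Fin N, ∑ b : Fin N,
      if a < b then q1 Λ (x a - x b) • (prj a - prj b) else 0)
  + (1/2:ℝ) • (∑ a : Fin N, q1 Λ (x a) • prj a)

lemma hasFDerivAt_FA {Λ : ℝ} (hΛ : Λ ≠ 0) {x : Fin N → ℝ} (hx : x ∈ cone N) :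
    HasFDerivAt (FA N Λ) (DFA Λ x) x := by
  unfold FA DFA
  apply HasFDerivAt.add
  · apply HasFDerivAt.const_mul
    apply HasFDerivAt.fun_sum
    intro a _
    apply HasFDerivAt.fun_sum
    intro b _
    by_cases hab : a < b
    · simp only [if_pos hab]
      exact hasFDerivAt_pair hΛ (cone_sub_ne hx hab)
    · simp only [if_neg hab]
      exact hasFDerivAt_const 0 x
  · apply HasFDerivAt.const_mul
    apply HasFDerivAt.fun_sum
    intro a _
    exact hasFDerivAt_single hΛ (ne_of_gt (hx.2 a))

noncomputable def d (a j : Fin N) : ℝ := if a = j then 1 else 0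

lemma single_apply (j a : Fin N) : (Pi.single j 1 : Fin N → ℝ) a = d a j := by
  simp [Pi.single_apply, d]

noncomputable def G (Λ : ℝ) (j : Fin N) (y : Fin N → ℝ) : ℝ :=
  (1/2) * (∑ a : Fin N, ∑ b : Fin N,
      if a < b then (d a j - d b j) * q1 Λ (y a - y b) else 0)
  + (1/2) * q1 Λ (y j)

lemma pd_FA {Λ : ℝ} (hΛ : Λ ≠ 0) (j : Fin N) {x : Fin N → ℝ} (hx : x ∈ cone N) :
    pd j (FA N Λ) x = G Λ j x := by
  unfold pd
  rw [(hasFDerivAt_FA hΛ hx).fderiv]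
  unfold DFA G
  simp only [ContinuousLinearMap.add_apply, ContinuousLinearMap.coe_smul',
    Pi.smul_apply, ContinuousLinearMap.coe_sum', Finset.sum_apply,
    apply_ite (fun (L : (Fin N → ℝ) →L[ℝ] ℝ) => L (Pi.single j 1)),
    ContinuousLinearMap.zero_apply, ContinuousLinearMap.smul_apply,
    ContinuousLinearMap.sub_apply, ContinuousLinearMap.proj_apply,
    smul_eq_mul, single_apply]
  congr 1
  · congr 1
    apply Finset.sum_congr rfl; intro a _
    apply Finset.sum_congr rfl; intro b _
    split_ifs with h
    · ring
    · rfl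
  · congr 1
    rw [Finset.sum_eq_single j]
    · simp [d]
    · intro b _ hb; simp [d, hb]
    · intro h; exact absurd (Finset.mem_univ j) h

noncomputable def DG (Λ : ℝ) (j : Fin N) (x : Fin N → ℝ) : (Fin N → ℝ) →L[ℝ] ℝ :=
  (1/2:ℝ) • (∑ a : Fin N, ∑ b : Fin N,
      if a < b then (d a j - d b j) • ((q2 Λ (x a - x b)) • (prj a - prj b)) else 0)
  + (1/2:ℝ) • ((q2 Λ (x j)) • prj j)

lemma hasFDerivAt_G {Λ : ℝ} (hΛ : Λ ≠ 0) (j : Fin N) {x : Fin N → ℝ} (hx : x ∈ cone N) :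
    HasFDerivAt (G Λ j) (DG Λ j x) x := by
  unfold G DG
  apply HasFDerivAt.add
  · apply HasFDerivAt.const_mul
    apply HasFDerivAt.fun_sum
    intro a _
    apply HasFDerivAt.fun_sum
    intro b _
    by_cases hab : a < b
    · simp only [if_pos hab]
      exact (hasFDerivAt_pair1 hΛ (cone_sub_ne hx hab)).const_mul _
    · simp only [if_neg hab]
      exact hasFDerivAt_const 0 x
  · apply HasFDerivAt.const_mul
    exact hasFDerivAt_single1 hΛ (ne_of_gt (hx.2 j))

lemma isOpen_cone : IsOpen (cone N) := by
  have : cone N =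
      (⋂ (a : Fin N), ⋂ (b : Fin N), ⋂ (_ : a < b), {x : Fin N → ℝ | x b < x a})
      ∩ ⋂ (i : Fin N), {x : Fin N → ℝ | 0 < x i} := by
    ext x
    simp only [cone, Set.mem_inter_iff, Set.mem_iInter, Set.mem_setOf_eq]
    constructor
    · rintro ⟨h1, h2⟩; exact ⟨fun a b hab => h1 hab, h2⟩
    · rintro ⟨h1, h2⟩; exact ⟨fun a b hab => h1 a b hab, h2⟩
  rw [this]
  apply IsOpen.inter
  · exact isOpen_iInter_of_finite fun a => isOpen_iInter_of_finite fun b =>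
      isOpen_iInter_of_finite fun _ => isOpen_lt (continuous_apply b) (continuous_apply a)
  · exact isOpen_iInter_of_finite fun i => isOpen_lt continuous_const (continuous_apply i)

lemma hess_FA {Λ : ℝ} (hΛ : Λ ≠ 0) (i j : Fin N) {x : Fin N → ℝ} (hx : x ∈ cone N) :
    hess (FA N Λ) i j x =
      (1/2) * (∑ a : Fin N, ∑ b : Fin N,
        if a < b then (d a j - d b j) * (q2 Λ (x a - x b) * (d a i - d b i)) else 0)
      + (1/2) * (q2 Λ (x j) * d j i) := by
  unfold hess pd
  have hEq : (fun y => fderiv ℝ (FA N Λ) y (Pi.single j 1)) =ᶠ[nhds x] G Λ j := by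
    filter_upwards [isOpen_cone.mem_nhds hx] with y hy
    exact pd_FA hΛ j hy
  rw [hEq.fderiv_eq, (hasFDerivAt_G hΛ j hx).fderiv]
  unfold DG
  simp only [ContinuousLinearMap.add_apply, ContinuousLinearMap.coe_smul',
    Pi.smul_apply, ContinuousLinearMap.coe_sum', Finset.sum_apply,
    apply_ite (fun (L : (Fin N → ℝ) →L[ℝ] ℝ) => L (Pi.single i 1)),
    ContinuousLinearMap.zero_apply, ContinuousLinearMap.smul_apply,
    ContinuousLinearMap.sub_apply, ContinuousLinearMap.proj_apply,
    smul_eq_mul, single_apply]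


lemma hess_offdiag {Λ : ℝ} (hΛ : Λ ≠ 0) {i j : Fin N} (hij : i < j)
    {x : Fin N → ℝ} (hx : x ∈ cone N) :
    hess (FA N Λ) i j x = -(Real.log ((x i - x j)/Λ) + 3/2) := by
  rw [hess_FA hΛ i j hx]
  have hS : (∑ a : Fin N, ∑ b : Fin N,
      if a < b then (d a j - d b j) * (q2 Λ (x a - x b) * (d a i - d b i)) else 0)
      = -(q2 Λ (x i - x j)) := by
    rw [Finset.sum_eq_single i]
    · rw [Finset.sum_eq_single j]
      · simp [d, hij, hij.ne, hij.ne']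
      · intro b _ hb
        by_cases hib : i < b
        · simp [d, hib, hij.ne, hb]
        · simp [hib]
      · intro h; exact absurd (Finset.mem_univ j) h
    · intro a _ ha
      apply Finset.sum_eq_zero; intro b _
      by_cases hab : a < b
      · by_cases hbi : b = i
        · subst hbi
          have haj : a ≠ j := ne_of_lt (hab.trans hij)
          simp [d, hab, haj, hij.ne]
        · simp [d, hab, ha, hbi]
      · simp [hab]
    · intro h; exact absurd (Finset.mem_univ i) h
  rw [hS]
  have hdji : d j i = 0 := by simp [d, hij.ne']
  rw [hdji]
  unfold q2; ring

lemma hess_rowsum {Λ : ℝ} (hΛ : Λ ≠ 0) (i : Fin N) {x : Fin N → ℝ} (hx : x ∈ cone N) :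
    ∑ p, hess (FA N Λ) i p x = Real.log (x i / Λ) + 3/2 := by
  have hstep : ∑ p, hess (FA N Λ) i p x
      = ∑ p : Fin N, ((1/2) * (∑ a : Fin N, ∑ b : Fin N,
          if a < b then (d a p - d b p) * (q2 Λ (x a - x b) * (d a i - d b i)) else 0)
        + (1/2) * (q2 Λ (x p) * d p i)) :=
    Finset.sum_congr rfl fun p _ => hess_FA hΛ i p hx
  rw [hstep, Finset.sum_add_distrib]
  have hA : ∑ p : Fin N, (1/2) * (∑ a : Fin N, ∑ b : Fin N,
      if a < b then (d a p - d b p) * (q2 Λ (x a - x b) * (d a i - d b i)) else 0) = 0 := by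
    rw [← Finset.mul_sum, Finset.sum_comm]
    have hinner : ∀ a : Fin N, (∑ p : Fin N, ∑ b : Fin N,
        if a < b then (d a p - d b p) * (q2 Λ (x a - x b) * (d a i - d b i)) else 0) = 0 := by
      intro a
      rw [Finset.sum_comm]
      apply Finset.sum_eq_zero; intro b _
      by_cases hab : a < b
      · simp only [if_pos hab]
        rw [← Finset.sum_mul]
        have hz : ∑ p : Fin N, (d a p - d b p) = 0 := by
          rw [Finset.sum_sub_distrib]
          simp [d, Finset.sum_ite_eq]
        rw [hz, zero_mul]
      · simp [hab]
    rw [Finset.sum_congr rfl fun a _ => hinner a]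
    simp
  have hB : ∑ p : Fin N, (1/2) * (q2 Λ (x p) * d p i) = (1/2) * q2 Λ (x i) := by
    rw [Finset.sum_eq_single i]
    · simp [d]
    · intro p _ hp; simp [d, hp]
    · intro h; exact absurd (Finset.mem_univ i) h
  rw [hA, hB]
  unfold q2; ring

end TypeA

theorem typeA_row_relation (N : ℕ) (hN : 2 ≤ N) (x : Fin N → ℝ) (hx : x ∈ cone N)
    (i j : Fin N) (hij : i < j) :
    Real.exp (-(hess (FA N (Real.exp (3/2))) i j x)) =
      Real.exp (∑ p, hess (FA N (Real.exp (3/2))) i p x)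
        - Real.exp (∑ q, hess (FA N (Real.exp (3/2))) j q x) := by
  set Λ : ℝ := Real.exp (3/2) with hΛdef
  have hΛ : Λ ≠ 0 := (Real.exp_pos _).ne'
  have hlogΛ : Real.log Λ = 3/2 := Real.log_exp _
  have hxi : 0 < x i := hx.2 i
  have hxj : 0 < x j := hx.2 j
  have hsub : 0 < x i - x j := sub_pos.2 (hx.1 hij)
  have h1 : hess (FA N Λ) i j x = -Real.log (x i - x j) := by
    rw [TypeA.hess_offdiag hΛ hij hx, Real.log_div (ne_of_gt hsub) hΛ, hlogΛ]; ring
  have h2 : ∑ p, hess (FA N Λ) i p x = Real.log (x i) := by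
    rw [TypeA.hess_rowsum hΛ i hx, Real.log_div (ne_of_gt hxi) hΛ, hlogΛ]; ring
  have h3 : ∑ q, hess (FA N Λ) j q x = Real.log (x j) := by
    rw [TypeA.hess_rowsum hΛ j hx, Real.log_div (ne_of_gt hxj) hΛ, hlogΛ]; ring
  rw [h1, h2, h3, neg_neg, Real.exp_log hsub, Real.exp_log hxi, Real.exp_log hxj]
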